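/- arXiv:1401.1329 — 2 statements merged into one kernel-verified Lean document; each statement's English description precedes it below -/
import Mathlib

section
/- Fix m ≥ 2 and b < 0 with w_b(r) = sinh(√(-b) r)/√(-b). Then the model space M_{w_b}^m is balanced from below: (∫₀^r w_b(s)^{m-1} ds / w_b(r)^{m-1}) · (w_b'(r)/w_b(r)) ≥ 1/m for all r > 0. -/
open MeasureTheory Set

private lemma ftc_sinh_pow (m : ℕ) (κ : ℝ) (r : ℝ) :
    ∫ s in (0:ℝ)..r, (m : ℝ) * Real.sinh (κ * s) ^ (m - 1) * (Real.cosh (κ * s) * κ)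
      = Real.sinh (κ * r) ^ m - Real.sinh (κ * 0) ^ m := by
  apply intervalIntegral.integral_eq_sub_of_hasDerivAt
  · intro s _
    have h1 : HasDerivAt (fun s : ℝ => κ * s) κ s := by
      simpa using (hasDerivAt_id s).const_mul κ
    have h2 : HasDerivAt (fun s : ℝ => Real.sinh (κ * s)) (Real.cosh (κ * s) * κ) s :=
      (Real.hasDerivAt_sinh (κ * s)).comp s h1
    simpa [mul_assoc] using h2.fun_pow m
  · apply Continuous.intervalIntegrable
    continuity

private lemma key_bound (m : ℕ) (hm : 1 ≤ m) (κ : ℝ) (hκ : 0 < κ) (r : ℝ) (hr : 0 < r) :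
    Real.sinh (κ * r) ^ m / ((m : ℝ) * κ * Real.cosh (κ * r))
      ≤ ∫ s in (0:ℝ)..r, Real.sinh (κ * s) ^ (m - 1) := by
  have hC : 0 < Real.cosh (κ * r) := Real.cosh_pos _
  have hm0 : (0:ℝ) < m := by exact_mod_cast Nat.lt_of_lt_of_le Nat.zero_lt_one hm
  have hint : ∫ s in (0:ℝ)..r,
      (m : ℝ) * Real.sinh (κ * s) ^ (m - 1) * (Real.cosh (κ * s) * κ)
        = Real.sinh (κ * r) ^ m := by
    rw [ftc_sinh_pow]
    simp [Real.sinh_zero, zero_pow (by omega : m ≠ 0)]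
  have hmono : ∫ s in (0:ℝ)..r,
      (m : ℝ) * Real.sinh (κ * s) ^ (m - 1) * (Real.cosh (κ * s) * κ)
        / ((m : ℝ) * κ * Real.cosh (κ * r))
      ≤ ∫ s in (0:ℝ)..r, Real.sinh (κ * s) ^ (m - 1) := by
    apply intervalIntegral.integral_mono_on hr.le
    · apply Continuous.intervalIntegrable; continuity
    · apply Continuous.intervalIntegrable; continuity
    · intro s hs
      have hs0 : 0 ≤ s := hs.1
      have hsin : 0 ≤ Real.sinh (κ * s) := Real.sinh_nonneg_iff.mpr (by positivity)
      have hcosh : Real.cosh (κ * s) ≤ Real.cosh (κ * r) := by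
        rw [Real.cosh_le_cosh]
        rw [abs_of_nonneg (by positivity), abs_of_nonneg (by positivity)]
        exact mul_le_mul_of_nonneg_left hs.2 hκ.le
      rw [div_le_iff₀ (by positivity)]
      calc (m : ℝ) * Real.sinh (κ * s) ^ (m - 1) * (Real.cosh (κ * s) * κ)
          ≤ (m : ℝ) * Real.sinh (κ * s) ^ (m - 1) * (Real.cosh (κ * r) * κ) := by
            apply mul_le_mul_of_nonneg_left _ (by positivity)
            exact mul_le_mul_of_nonneg_right hcosh hκ.le
        _ = Real.sinh (κ * s) ^ (m - 1) * ((m : ℝ) * κ * Real.cosh (κ * r)) := by ring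
  calc Real.sinh (κ * r) ^ m / ((m : ℝ) * κ * Real.cosh (κ * r))
      = ∫ s in (0:ℝ)..r,
          (m : ℝ) * Real.sinh (κ * s) ^ (m - 1) * (Real.cosh (κ * s) * κ)
            / ((m : ℝ) * κ * Real.cosh (κ * r)) := by
        rw [intervalIntegral.integral_div, hint]
    _ ≤ _ := hmono

/-- For `m ≥ 2` and `b < 0`, the hyperbolic model `M_{w_b}^m` is balanced
from below: `q_{w_b}(r) · (w_b'(r)/w_b(r)) ≥ 1/m` for all `r > 0`. -/
theorem hyperbolic_model_balanced_from_below
    (m : ℕ) (hm : 2 ≤ m) (b : ℝ) (hb : b < 0) (w : ℝ → ℝ)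
    (hw : w = fun r => Real.sinh (Real.sqrt (-b) * r) / Real.sqrt (-b)) :
    ∀ r > (0:ℝ),
      ((∫ s in (0:ℝ)..r, w s ^ (m - 1)) / w r ^ (m - 1)) * (deriv w r / w r)
        ≥ 1 / (m:ℝ) := by
  intro r hr
  set κ := Real.sqrt (-b) with hκdef
  have hκ : 0 < κ := Real.sqrt_pos.mpr (by linarith)
  have hS : 0 < Real.sinh (κ * r) := Real.sinh_pos_iff.mpr (by positivity)
  have hC : 0 < Real.cosh (κ * r) := Real.cosh_pos _
  have hm0 : (0:ℝ) < m := by positivity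
  -- deriv
  have hderiv : deriv w r = Real.cosh (κ * r) := by
    have h1 : HasDerivAt (fun s : ℝ => κ * s) κ r := by
      simpa using (hasDerivAt_id r).const_mul κ
    have h2 : HasDerivAt w (Real.cosh (κ * r) * κ / κ) r := by
      rw [hw]
      exact ((Real.hasDerivAt_sinh (κ * r)).comp r h1).div_const κ
    rw [h2.deriv, mul_div_assoc, div_self hκ.ne', mul_one]
  -- integral rewrite
  have hintrw : (∫ s in (0:ℝ)..r, w s ^ (m - 1))
      = (∫ s in (0:ℝ)..r, Real.sinh (κ * s) ^ (m - 1)) / κ ^ (m - 1) := by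
    rw [hw, ← intervalIntegral.integral_div]
    simp [div_pow]
  have hkey := key_bound m (by omega) κ hκ r hr
  set I := ∫ s in (0:ℝ)..r, Real.sinh (κ * s) ^ (m - 1) with hI
  have hwr : w r = Real.sinh (κ * r) / κ := by rw [hw]
  rw [hintrw, hderiv, hwr, ge_iff_le, div_pow]
  have hSm : (0:ℝ) < Real.sinh (κ * r) ^ m := by positivity
  set S := Real.sinh (κ * r)
  set C := Real.cosh (κ * r)
  have hpow : S ^ (m - 1) * S = S ^ m := by
    rw [← pow_succ]; congr 1; omega
  rw [div_le_iff₀ (by positivity : (0:ℝ) < (m:ℝ) * κ * C)] at hkey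
  have heq : I / κ ^ (m - 1) / (S ^ (m - 1) / κ ^ (m - 1)) * (C / (S / κ))
      = I * C * κ / (S ^ (m - 1) * S) := by
    field_simp
  rw [heq, hpow, div_le_div_iff₀ hm0 (by positivity)]
  nlinarith [hkey]
end

section
/- Let V, F : (0,∞) → (0,∞) be non-decreasing functions with V ≤ F, V bounded above by S < ∞, V differentiable, and suppose 0 ≤ F(s) − V(s) ≤ S·s·(log V)'(s) for all s. Then sup_s F(s) = sup_s V(s), i.e., lim_{s→∞} F(s) = lim_{s→∞} V(s). -/
/-- Auxiliary: a positive bounded function cannot have `(log V)' > c/t` for all `t ≥ a`. -/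
lemma flux_key (V : ℝ → ℝ) (S : ℝ)
    (hV_pos : ∀ s > (0:ℝ), 0 < V s)
    (hVS : ∀ s > (0:ℝ), V s ≤ S)
    (hV_diff : ∀ s > (0:ℝ), DifferentiableAt ℝ V s)
    (c : ℝ) (hc : 0 < c) (a : ℝ) (ha : 0 < a) :
    ¬ (∀ t, a ≤ t → c / t < deriv (fun t => Real.log (V t)) t) := by
  intro H
  set g : ℝ → ℝ := fun x => Real.log (V x) - c * Real.log x with hg_def
  have hdiff : ∀ x ∈ Set.Ici a, DifferentiableAt ℝ g x := by
    intro x hx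
    have hx0 : 0 < x := lt_of_lt_of_le ha hx
    exact ((hV_diff x hx0).log (hV_pos x hx0).ne').sub
      ((Real.differentiableAt_log hx0.ne').const_mul c)
  have hderiv : ∀ x ∈ interior (Set.Ici a), 0 ≤ deriv g x := by
    rw [interior_Ici]
    intro x hx
    have hx0 : 0 < x := lt_trans ha hx
    have d1 : DifferentiableAt ℝ (fun t => Real.log (V t)) x :=
      (hV_diff x hx0).log (hV_pos x hx0).ne'
    have d2 : DifferentiableAt ℝ (fun t => c * Real.log t) x :=
      (Real.differentiableAt_log hx0.ne').const_mul c
    have h1 : deriv g x = deriv (fun t => Real.log (V t)) x - c * x⁻¹ := by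
      rw [hg_def]
      rw [deriv_fun_sub d1 d2, deriv_const_mul _ (Real.differentiableAt_log hx0.ne'),
        Real.deriv_log]
    have h2 := H x (le_of_lt hx)
    rw [h1]
    have : c * x⁻¹ = c / x := by ring
    rw [this]
    linarith
  have hmono : MonotoneOn g (Set.Ici a) := by
    apply monotoneOn_of_deriv_nonneg (convex_Ici a)
    · exact fun x hx => (hdiff x hx).continuousAt.continuousWithinAt
    · intro x hx
      rw [interior_Ici] at hx
      exact (hdiff x (Set.mem_Ici.mpr (le_of_lt (Set.mem_Ioi.mp hx)))).differentiableWithinAt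
    · exact hderiv
  set b : ℝ := max a (Real.exp ((Real.log S - g a + 1) / c)) with hb_def
  have hab : a ≤ b := le_max_left _ _
  have hb0 : 0 < b := lt_of_lt_of_le ha hab
  have hgab : g a ≤ g b := hmono Set.self_mem_Ici hab hab
  have hlogb : (Real.log S - g a + 1) / c ≤ Real.log b := by
    rw [Real.le_log_iff_exp_le hb0]
    exact le_max_right _ _
  have hclogb : Real.log S - g a + 1 ≤ c * Real.log b := by
    rw [div_le_iff₀ hc] at hlogb
    linarith
  have hVb : Real.log (V b) ≤ Real.log S := by
    exact Real.log_le_log (hV_pos b hb0) (hVS b hb0)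
  have : g b + c * Real.log b = Real.log (V b) := by simp [hg_def]
  linarith [hgab, hclogb, hVb, this]

/-- If `V ≤ F` are positive non-decreasing on `(0,∞)`, `V` differentiable
and bounded by `S`, and `0 ≤ F(s) − V(s) ≤ S·s·(log V)'(s)` for all `s > 0`, then
`sup F = sup V` (the flux and volume quotients have the same limit). -/
theorem flux_eq_volume_sup
    (V F : ℝ → ℝ) (S : ℝ)
    (hV_pos : ∀ s > (0:ℝ), 0 < V s) (hF_pos : ∀ s > (0:ℝ), 0 < F s)
    (hV_mono : MonotoneOn V (Set.Ioi 0)) (hF_mono : MonotoneOn F (Set.Ioi 0))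
    (hVF : ∀ s > (0:ℝ), V s ≤ F s)
    (hVS : ∀ s > (0:ℝ), V s ≤ S)
    (hV_diff : ∀ s > (0:ℝ), DifferentiableAt ℝ V s)
    (hbound : ∀ s > (0:ℝ),
      F s - V s ≤ S * s * deriv (fun t => Real.log (V t)) s) :
    sSup (F '' Set.Ioi 0) = sSup (V '' Set.Ioi 0) := by
  have hS : 0 < S := lt_of_lt_of_le (hV_pos 1 one_pos) (hVS 1 one_pos)
  set L := sSup (V '' Set.Ioi 0) with hL_def
  have hbddV : BddAbove (V '' Set.Ioi 0) := by
    refine ⟨S, ?_⟩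
    rintro _ ⟨s, hs, rfl⟩
    exact hVS s hs
  have hVL : ∀ s > (0:ℝ), V s ≤ L :=
    fun s hs => le_csSup hbddV ⟨s, hs, rfl⟩
  have hFL : ∀ s > (0:ℝ), F s ≤ L := by
    intro s hs
    refine le_of_forall_pos_le_add ?_
    intro ε hε
    -- there exists t ≥ s with F t - V t ≤ ε
    by_contra hcon
    push_neg at hcon
    have H : ∀ t, s ≤ t → (ε / S) / t < deriv (fun t => Real.log (V t)) t := by
      intro t ht
      have ht0 : 0 < t := lt_of_lt_of_le hs ht
      have h1 : ε < F t - V t := by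
        have : F s ≤ F t := hF_mono hs (lt_of_lt_of_le hs ht) ht
        have h2 : V t ≤ L := hVL t ht0
        nlinarith [hcon]
      have h2 := hbound t ht0
      have h3 : ε < S * t * deriv (fun t => Real.log (V t)) t := lt_of_lt_of_le h1 h2
      rw [div_div, div_lt_iff₀ (by positivity)]
      nlinarith
    exact flux_key V S hV_pos hVS hV_diff (ε / S) (by positivity) s hs H
  have hne : (F '' Set.Ioi 0).Nonempty := ⟨F 1, 1, Set.mem_Ioi.mpr one_pos, rfl⟩
  have h1 : sSup (F '' Set.Ioi 0) ≤ L := by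
    apply csSup_le hne
    rintro _ ⟨t, ht, rfl⟩
    exact hFL t ht
  have hbddF : BddAbove (F '' Set.Ioi 0) := by
    refine ⟨L, ?_⟩
    rintro _ ⟨t, ht, rfl⟩
    exact hFL t ht
  have h2 : L ≤ sSup (F '' Set.Ioi 0) := by
    refine csSup_le ⟨V 1, 1, Set.mem_Ioi.mpr one_pos, rfl⟩ ?_
    rintro _ ⟨t, ht, rfl⟩
    exact le_trans (hVF t ht) (le_csSup hbddF ⟨t, ht, rfl⟩)
  exact le_antisymm h1 h2
end
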